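/- Let l1 ≥ 2 and l2 ≥ 1 be integers and let y be a formal power series over ℚ in one variable x satisfying y = x·(1 + y^{l1−1})^{l2−1}. Then for every integer d ≥ 1, the coefficient of x^{(l1−1)·d+1} in y^{l1} equals (l1/((l1−1)·d+1)) · binomial((l1−1)·(l2−1)·d + l2 − 1, d−1). -/

import Mathlib

open PowerSeries

open Finset in
lemma vand (c N m : ℕ) (hm : 1 ≤ m) :
    ∑ j ∈ Finset.range (m+1), Nat.choose c j * j * Nat.choose N (m - j)
      = c * Nat.choose (N + c - 1) (m - 1) := by
  rcases Nat.eq_zero_or_pos c with hc | hc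
  · subst hc
    rw [zero_mul]
    apply Finset.sum_eq_zero
    intro j hj
    rcases Nat.eq_zero_or_pos j with h0 | h0
    · subst h0; simp
    · rw [Nat.choose_eq_zero_of_lt (by omega), zero_mul, zero_mul]
  · obtain ⟨c', rfl⟩ : ∃ c', c = c' + 1 := ⟨c - 1, by omega⟩
    obtain ⟨m', rfl⟩ : ∃ m', m = m' + 1 := ⟨m - 1, by omega⟩
    rw [Finset.sum_range_succ']
    simp only [Nat.mul_zero, Nat.zero_mul, mul_zero, zero_mul, add_zero]
    have hterm : ∀ i, Nat.choose (c'+1) (i+1) * (i+1) * Nat.choose N (m'+1 - (i+1))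
        = (c'+1) * (Nat.choose c' i * Nat.choose N (m' - i)) := by
      intro i
      have h := Nat.add_one_mul_choose_eq c' i
      rw [Nat.succ_sub_succ]
      rw [show Nat.choose (c'+1) (i+1) * (i+1) = (c'+1) * Nat.choose c' i from h.symm]
      ring
    rw [Finset.sum_congr rfl (fun i _ => hterm i), ← Finset.mul_sum]
    have hv := Nat.add_choose_eq c' N m'
    rw [Finset.Nat.sum_antidiagonal_eq_sum_range_succ_mk] at hv
    simp only [Nat.add_sub_cancel] at hv ⊢
    have h2 : N + (c' + 1) - 1 = c' + N := by omega
    rw [h2, ← hv]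

open Finset in
lemma key (a b k m : ℕ) (hk : 1 ≤ k) (hm : 1 ≤ m) :
    (a*m + k) * ∑ j ∈ Finset.range (m+1),
        Nat.choose (b*k) j * j * Nat.choose (a*b*m) (m-j)
      = k * m * Nat.choose (b*(a*m+k)) m := by
  rw [vand _ _ _ hm]
  rcases Nat.eq_zero_or_pos b with hb | hb
  · subst hb
    simp [Nat.choose_eq_zero_of_lt (by omega : 0 < m)]
  · set N := a*b*m + b*k with hN
    have hN1 : 1 ≤ N := by { have := Nat.mul_pos hb hk; have h0 : 0 ≤ a*b*m := Nat.zero_le _; omega }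
    have hmain : N * Nat.choose (N-1) (m-1) = Nat.choose N m * m := by
      have := Nat.add_one_mul_choose_eq (N-1) (m-1)
      rw [show N-1+1 = N from by omega, show m-1+1 = m from by omega] at this
      exact this
    have hbn : b*(a*m+k) = N := by rw [hN]; ring
    rw [hbn]
    have : k * m * Nat.choose N m = k * (Nat.choose N m * m) := by ring
    rw [this, ← hmain, hN]
    ring

open Finset in
lemma main (a b : ℕ) (ha : 1 ≤ a) (y : PowerSeries ℚ)
    (hy : y = X * (1 + y ^ a) ^ b) :
    ∀ n k m : ℕ, 1 ≤ k → n = a * m + k →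
      coeff n (y ^ k) = ((k : ℚ) / (n : ℚ)) * (Nat.choose (b*n) m : ℚ) := by
  set g : PowerSeries ℚ := (1 + y ^ a) ^ b with hg
  have hconst : constantCoeff y = 0 := by
    rw [hy]; simp
  have hgconst : constantCoeff g = 1 := by
    rw [hg]
    simp [map_pow, map_add, map_one, hconst, zero_pow (by omega : a ≠ 0)]
  have hyk : ∀ k : ℕ, y ^ k = X ^ k * g ^ k := by
    intro k; rw [hy, mul_pow]
  have hlt : ∀ n k : ℕ, n < k → coeff n (y ^ k) = 0 := by
    intro n k h
    rw [hyk, coeff_X_pow_mul', if_neg (by omega)]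
  have hexp : ∀ k : ℕ, g ^ k = ∑ j ∈ range (b*k+1),
      y ^ (a*j) * (Nat.choose (b*k) j : PowerSeries ℚ) := by
    intro k
    rw [hg, ← pow_mul, show (1 : PowerSeries ℚ) + y ^ a = y ^ a + 1 from by ring,
      add_pow]
    refine Finset.sum_congr rfl (fun j _ => ?_)
    rw [one_pow, ← pow_mul, mul_one]
  intro n
  induction n using Nat.strong_induction_on with
  | _ n IH =>
    intro k m hk hnm
    rcases Nat.eq_zero_or_pos m with hm | hm
    · -- base case: n = k
      subst hm
      simp only [Nat.mul_zero, Nat.zero_add] at hnm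
      subst hnm
      rw [hyk, coeff_X_pow_mul', if_pos le_rfl, Nat.sub_self,
        coeff_zero_eq_constantCoeff, map_pow, hgconst, one_pow, Nat.choose_zero_right,
        Nat.cast_one, mul_one, div_self (Nat.cast_ne_zero.2 (by omega : n ≠ 0))]
    · -- inductive case
      have hn0 : n ≠ 0 := by omega
      have ham : 1 ≤ a * m := Nat.mul_le_mul ha hm
      rw [hyk, hnm, show a * m + k = a * m + k from rfl, coeff_X_pow_mul' , if_pos (by omega),
        Nat.add_sub_cancel, hexp, map_sum]
      have hterm : ∀ j, coeff (a*m) (y ^ (a*j) * (Nat.choose (b*k) j : PowerSeries ℚ))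
          = coeff (a*m) (y ^ (a*j)) * (Nat.choose (b*k) j : ℚ) := by
        intro j
        rw [← map_natCast C (Nat.choose (b*k) j), coeff_mul_C]
      rw [Finset.sum_congr rfl (fun j _ => hterm j)]
      -- F and G
      set F : ℕ → ℚ := fun j => coeff (a*m) (y ^ (a*j)) * (Nat.choose (b*k) j : ℚ) with hF
      set G : ℕ → ℚ := fun j =>
        ((Nat.choose (b*k) j * j * Nat.choose (a*b*m) (m-j) : ℕ) : ℚ) / (m : ℚ) with hG
      have hFG : ∀ j ≤ m, F j = G j := by
        intro j hj
        rcases Nat.eq_zero_or_pos j with h0 | h0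
        · subst h0
          simp only [hF, hG, Nat.mul_zero, pow_zero, coeff_one,
            if_neg (by omega : a*m ≠ 0)]
          push_cast
          simp
        · have hIH := IH (a*m) (by omega) (a*j) (m - j) (Nat.mul_pos (by omega) h0)
            (by rw [← Nat.mul_add]; congr 1; omega)
          rw [hF, hG]
          simp only []
          rw [hIH]
          have hb : b * (a*m) = a*b*m := by ring
          rw [hb]
          push_cast
          have ha0 : (a : ℚ) ≠ 0 := Nat.cast_ne_zero.2 (by omega)
          have hm0 : (m : ℚ) ≠ 0 := Nat.cast_ne_zero.2 (by omega)
          field_simp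
      have hF0 : ∀ j, m < j → F j = 0 := by
        intro j hj
        rw [hF]
        simp only []
        rw [hlt (a*m) (a*j) (mul_lt_mul_of_pos_left hj (by omega : (0:ℕ) < a)), zero_mul]
      have hG0 : ∀ j, b*k < j → G j = 0 := by
        intro j hj
        rw [hG]
        simp only []
        rw [Nat.choose_eq_zero_of_lt hj]
        push_cast
        simp
      -- common range
      have hsum : ∑ j ∈ range (b*k+1), F j = ∑ j ∈ range (m+1), G j := by
        have h1 : ∑ j ∈ range (b*k+1), F j = ∑ j ∈ range (min (b*k+1) (m+1)), F j := by
          refine (Finset.sum_subset (Finset.range_subset_range.2 (min_le_left _ _)) ?_).symm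
          intro j hj1 hj2
          simp only [Finset.mem_range] at hj1 hj2
          exact hF0 j (by omega)
        have h2 : ∑ j ∈ range (m+1), G j = ∑ j ∈ range (min (b*k+1) (m+1)), G j := by
          refine (Finset.sum_subset (Finset.range_subset_range.2 (min_le_right _ _)) ?_).symm
          intro j hj1 hj2
          simp only [Finset.mem_range] at hj1 hj2
          exact hG0 j (by omega)
        rw [h1, h2]
        refine Finset.sum_congr rfl (fun j hj => ?_)
        simp only [Finset.mem_range] at hj
        exact hFG j (by omega)
      rw [hsum, hG]
      simp only []
      rw [← Finset.sum_div, ← Nat.cast_sum]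
      -- use key identity
      have hkey := key a b k m hk hm
      have hkeyQ : ((a*m+k : ℕ) : ℚ) * ((∑ j ∈ range (m+1),
          Nat.choose (b*k) j * j * Nat.choose (a*b*m) (m-j) : ℕ) : ℚ)
          = ((k : ℕ) : ℚ) * (m : ℚ) * ((Nat.choose (b*(a*m+k)) m : ℕ) : ℚ) := by
        exact_mod_cast congrArg (Nat.cast : ℕ → ℚ) hkey
      have hn0' : ((a*m+k : ℕ) : ℚ) ≠ 0 := Nat.cast_ne_zero.2 (by omega)
      have hm0 : (m : ℚ) ≠ 0 := Nat.cast_ne_zero.2 (by omega)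
      push_cast at hkeyQ hn0' ⊢
      field_simp
      linear_combination hkeyQ

/-- For `l1 ≥ 2`, `l2 ≥ 1`, and `y ∈ ℚ[[x]]` with `y = x·(1 + y^{l1−1})^{l2−1}`,
the coefficient of `x^{(l1−1)d+1}` in `y^{l1}` equals
`(l1/((l1−1)d+1)) · binom((l1−1)(l2−1)d + l2 − 1, d−1)`. -/
theorem localization_tree_coeff (l1 l2 : ℕ) (hl1 : 2 ≤ l1) (hl2 : 1 ≤ l2)
    (y : PowerSeries ℚ) (hy : y = PowerSeries.X * (1 + y ^ (l1 - 1)) ^ (l2 - 1))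
    (d : ℕ) (hd : 1 ≤ d) :
    PowerSeries.coeff ((l1 - 1) * d + 1) (y ^ l1) =
      ((l1 : ℚ) / ((l1 - 1) * d + 1 : ℚ)) *
        (Nat.choose ((l1 - 1) * (l2 - 1) * d + l2 - 1) (d - 1) : ℚ) := by
  obtain ⟨c, rfl⟩ : ∃ c, l1 = c + 2 := ⟨l1 - 2, by omega⟩
  obtain ⟨f, rfl⟩ : ∃ f, l2 = f + 1 := ⟨l2 - 1, by omega⟩
  obtain ⟨e, rfl⟩ : ∃ e, d = e + 1 := ⟨d - 1, by omega⟩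
  have e1 : c + 2 - 1 = c + 1 := by omega
  rw [e1] at hy ⊢
  simp only [Nat.add_sub_cancel] at hy ⊢
  have h := main (c+1) f (by omega) y hy ((c+1)*(e+1)+1) (c+2) e (by omega) (by ring)
  rw [h]
  have h1 : (c+1)*f*(e+1) + (f+1) - 1 = f*((c+1)*(e+1)+1) := by
    have : (c+1)*f*(e+1) + (f+1) - 1 = (c+1)*f*(e+1) + f := by omega
    rw [this]; ring
  rw [h1]
  push_cast
  ring
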